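/- arXiv:1501.01684 — 6 statements merged into one kernel-verified Lean document; each statement's English description precedes it below -/
import Mathlib

section
/- Let A be the adjacency matrix of the complete multipartite graph with c parts of size n (c, n ≥ 2). Then A³ = (c²−3c+3)n²·A + (c²−3c+2)n²·(J − A), so A is the incidence matrix of a symmetric partial geometric design with parameters (cn, (c−1)n; (c²−3c+2)n², (c²−3c+3)n²). -/
open Matrix

/-- The adjacency matrix `A` of the complete multipartite graph with `c` parts of
size `n` (`c, n ≥ 2`) satisfies `A³ = (c²−3c+3)n²·A + (c²−3c+2)n²·(J − A)`,
and is the incidence matrix of a symmetric partial geometric design with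
parameters `(cn, (c−1)n; (c²−3c+2)n², (c²−3c+3)n²)`. -/
theorem completeMultipartite_partialGeometric (c n : ℕ) (hc : 2 ≤ c) (hn : 2 ≤ n)
    (A : Matrix (Fin c × Fin n) (Fin c × Fin n) ℝ)
    (hA : A = Matrix.of fun x y => if x.1 ≠ y.1 then (1 : ℝ) else 0)
    (J : Matrix (Fin c × Fin n) (Fin c × Fin n) ℝ)
    (hJ : J = Matrix.of fun _ _ => (1 : ℝ)) :
    A ^ 3 = (((c : ℝ) ^ 2 - 3 * c + 3) * n ^ 2) • A
        + (((c : ℝ) ^ 2 - 3 * c + 2) * n ^ 2) • (J - A) ∧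
    A * J = (((c : ℝ) - 1) * n) • J ∧
    J * A = (((c : ℝ) - 1) * n) • J := by
  set B : Matrix (Fin c × Fin n) (Fin c × Fin n) ℝ :=
    Matrix.of fun x y => if x.1 = y.1 then (1 : ℝ) else 0 with hB
  have hAB : A = J - B := by
    subst hA hJ; ext x y; by_cases h : x.1 = y.1 <;> simp [hB, h]
  have hJJ : J * J = ((c : ℝ) * n) • J := by
    subst hJ; ext x y
    simp [Matrix.mul_apply, Finset.sum_const, Fintype.card_prod, mul_comm]
  have hBJ : B * J = (n : ℝ) • J := by
    subst hJ; ext x y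
    simp [Matrix.mul_apply, hB, Fintype.sum_prod_type, Finset.sum_ite_eq']
    rw [Finset.card_filter, Fintype.sum_prod_type]
    simp [apply_ite Finset.card, Finset.sum_ite_eq, Finset.sum_ite_eq']
  have hJB : J * B = (n : ℝ) • J := by
    subst hJ; ext x y
    simp [Matrix.mul_apply, hB, Fintype.sum_prod_type, Finset.sum_ite_eq']
    rw [Finset.card_filter, Fintype.sum_prod_type]
    simp [apply_ite Finset.card, Finset.sum_ite_eq, Finset.sum_ite_eq']
  have hBB : B * B = (n : ℝ) • B := by
    ext x y
    by_cases h : x.1 = y.1 <;>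
      simp [Matrix.mul_apply, hB, Fintype.sum_prod_type, ite_and, h,
        Finset.sum_ite_eq', Finset.sum_ite_eq]
  have hJA : J * A = (((c : ℝ) - 1) * n) • J := by
    rw [hAB, mul_sub, hJJ, hJB]; module
  have hAJ : A * J = (((c : ℝ) - 1) * n) • J := by
    rw [hAB, sub_mul, hJJ, hBJ]; module
  have hBeq : B = J - A := by rw [hAB]; abel
  have hA2 : A * A = (((c : ℝ) - 1) * n) • J - (n : ℝ) • A := by
    rw [hAB, sub_mul, mul_sub, mul_sub, hJJ, hJB, hBJ, hBB, hBeq]; module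
  refine ⟨?_, hAJ, hJA⟩
  rw [pow_succ, pow_two, hA2, sub_mul, smul_mul_assoc, smul_mul_assoc, hJA, hA2]
  module
end

section
/- Let A_d = (J_n − I_n) ⊗ J_m. Then A_d³ = m²(n²−3n+2)(J_{mn} − A_d) + m²(n²−3n+3)A_d. Consequently, for n ≥ 2, A_d is the incidence matrix of a symmetric partial geometric design with parameters (mn, m(n−1); m²(n²−3n+2), m²(n²−3n+3)). -/
open Matrix Kronecker

lemma ones_mul_ones (k : ℕ) :
    (Matrix.of fun _ _ => (1 : ℝ) : Matrix (Fin k) (Fin k) ℝ) *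
      (Matrix.of fun _ _ => (1 : ℝ)) = (k : ℝ) • (Matrix.of fun _ _ => (1 : ℝ)) := by
  ext i j
  simp [Matrix.mul_apply]

/-- For `A_d = (J_n − I_n) ⊗ J_m`:
`A_d³ = m²(n²−3n+2)(J_{mn} − A_d) + m²(n²−3n+3)A_d`; consequently for `n ≥ 2`,
`A_d` is the incidence matrix of a symmetric partial geometric design with
parameters `(mn, m(n−1); m²(n²−3n+2), m²(n²−3n+3))`. -/
theorem kronecker_cube_partialGeometric (m n : ℕ) (hn : 2 ≤ n)
    (A : Matrix (Fin n × Fin m) (Fin n × Fin m) ℝ)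
    (hA : A = ((Matrix.of fun _ _ => (1 : ℝ)) - (1 : Matrix (Fin n) (Fin n) ℝ)) ⊗ₖ
        (Matrix.of fun _ _ => (1 : ℝ) : Matrix (Fin m) (Fin m) ℝ))
    (J : Matrix (Fin n × Fin m) (Fin n × Fin m) ℝ)
    (hJ : J = Matrix.of fun _ _ => (1 : ℝ)) :
    A ^ 3 = ((m : ℝ) ^ 2 * ((n : ℝ) ^ 2 - 3 * n + 2)) • (J - A)
        + ((m : ℝ) ^ 2 * ((n : ℝ) ^ 2 - 3 * n + 3)) • A ∧
    (∀ i j, A i j = 0 ∨ A i j = 1) ∧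
    A * J = ((m : ℝ) * ((n : ℝ) - 1)) • J ∧
    J * A = ((m : ℝ) * ((n : ℝ) - 1)) • J := by
  set Jn : Matrix (Fin n) (Fin n) ℝ := Matrix.of fun _ _ => (1 : ℝ) with hJn
  set Jm : Matrix (Fin m) (Fin m) ℝ := Matrix.of fun _ _ => (1 : ℝ) with hJm
  set B : Matrix (Fin n × Fin m) (Fin n × Fin m) ℝ :=
    (1 : Matrix (Fin n) (Fin n) ℝ) ⊗ₖ Jm with hB
  have hK : J = Jn ⊗ₖ Jm := by
    ext ⟨i1, i2⟩ ⟨j1, j2⟩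
    simp [hJ, hJn, hJm]
  have hAB : A = J - B := by
    ext ⟨i1, i2⟩ ⟨j1, j2⟩
    simp [hA, hJ, hJn, hJm, hB, Matrix.one_apply, sub_mul]
  have hKK : J * J = ((m : ℝ) * n) • J := by
    rw [hK, ← Matrix.mul_kronecker_mul, ones_mul_ones, ones_mul_ones,
      Matrix.smul_kronecker, Matrix.kronecker_smul, smul_smul, mul_comm]
  have hKB : J * B = (m : ℝ) • J := by
    rw [hK, hB, ← Matrix.mul_kronecker_mul, Matrix.mul_one, ones_mul_ones,
      Matrix.kronecker_smul]
  have hBK : B * J = (m : ℝ) • J := by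
    rw [hK, hB, ← Matrix.mul_kronecker_mul, Matrix.one_mul, ones_mul_ones,
      Matrix.kronecker_smul]
  have hBB : B * B = (m : ℝ) • B := by
    rw [hB, ← Matrix.mul_kronecker_mul, Matrix.one_mul, ones_mul_ones,
      Matrix.kronecker_smul]
  refine ⟨?_, ?_, ?_, ?_⟩
  · have h2 : A * A = ((m : ℝ) * n - 2 * m) • J + (m : ℝ) • B := by
      rw [hAB, sub_mul, mul_sub, mul_sub, hKK, hKB, hBK, hBB]
      module
    have h3 : A ^ 3 = (A * A) * A := by
      rw [pow_succ, pow_two]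
    rw [h3, h2, hAB, add_mul, smul_mul_assoc, smul_mul_assoc, mul_sub, mul_sub,
      hKK, hKB, hBK, hBB]
    have : J - (J - B) = B := by abel
    rw [this]
    module
  · intro i j
    rw [hA]
    rcases eq_or_ne i.1 j.1 with h | h
    · left
      simp [hJn, hJm, Matrix.kroneckerMap_apply, Matrix.sub_apply, Matrix.one_apply, h]
    · right
      simp [hJn, hJm, Matrix.kroneckerMap_apply, Matrix.sub_apply, Matrix.one_apply, h]
  · rw [hAB, sub_mul, hKK, hBK]
    module
  · rw [hAB, mul_sub, hKK, hKB]
    module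
end

section
/- The distance-1 graph of H(3,3) (the Hamming graph on 27 vertices of degree 6) yields a symmetric partial geometric design with parameters (27, 6; 6, 15): its adjacency matrix N satisfies NJ = JN = 6J and N³ = 15N + 6(J − N). -/
open Matrix

def hammingM : Matrix (Fin 3 → Fin 3) (Fin 3 → Fin 3) ℕ :=
  Matrix.of fun x y => if hammingDist x y = 1 then 1 else 0

def hammingJ : Matrix (Fin 3 → Fin 3) (Fin 3 → Fin 3) ℕ := Matrix.of fun _ _ => 1

lemma hammingM_mul_J : hammingM * hammingJ = 6 • hammingJ := by decide

lemma hammingJ_mul_M : hammingJ * hammingM = 6 • hammingJ := by decide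

lemma hammingM_cube : hammingM * hammingM * hammingM = 9 • hammingM + 6 • hammingJ := by
  decide

/-- The Hamming graph of `H(3,3)` (27 vertices, degree 6) yields a symmetric
partial geometric design with parameters `(27, 6; 6, 15)`:
`NJ = JN = 6J` and `N³ = 15N + 6(J − N)`. -/
theorem hamming_graph_design
    (N : Matrix (Fin 3 → Fin 3) (Fin 3 → Fin 3) ℝ)
    (hN : N = Matrix.of fun x y => if hammingDist x y = 1 then (1 : ℝ) else 0)
    (J : Matrix (Fin 3 → Fin 3) (Fin 3 → Fin 3) ℝ)
    (hJ : J = Matrix.of fun _ _ => (1 : ℝ)) :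
    N * J = (6 : ℝ) • J ∧ J * N = (6 : ℝ) • J ∧
    N ^ 3 = (15 : ℝ) • N + (6 : ℝ) • (J - N) := by
  have hNm : N = hammingM.map (Nat.cast : ℕ → ℝ) := by
    subst hN; ext x y
    simp [hammingM, apply_ite (Nat.cast : ℕ → ℝ)]
  have hJm : J = hammingJ.map (Nat.cast : ℕ → ℝ) := by
    subst hJ; ext x y; simp [hammingJ]
  have hmap : ∀ (A B : Matrix (Fin 3 → Fin 3) (Fin 3 → Fin 3) ℕ),
      (A * B).map (Nat.cast : ℕ → ℝ) = A.map (Nat.cast : ℕ → ℝ) * B.map (Nat.cast : ℕ → ℝ) := by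
    intro A B; ext x y
    rw [Matrix.map_apply, Matrix.mul_apply, Matrix.mul_apply, Nat.cast_sum]
    simp only [Nat.cast_mul, Matrix.map_apply]
  have hsmul : ∀ (c : ℕ) (A : Matrix (Fin 3 → Fin 3) (Fin 3 → Fin 3) ℕ),
      (c • A).map (Nat.cast : ℕ → ℝ) = (c : ℝ) • A.map (Nat.cast : ℕ → ℝ) := by
    intro c A; ext x y
    rw [Matrix.map_apply, Matrix.smul_apply, smul_eq_mul, Nat.cast_mul, Matrix.smul_apply,
      Matrix.map_apply, smul_eq_mul]
  have hadd : ∀ (A B : Matrix (Fin 3 → Fin 3) (Fin 3 → Fin 3) ℕ),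
      (A + B).map (Nat.cast : ℕ → ℝ) = A.map (Nat.cast : ℕ → ℝ) + B.map (Nat.cast : ℕ → ℝ) := by
    intro A B; ext x y; simp
  refine ⟨?_, ?_, ?_⟩
  · rw [hNm, hJm, ← hmap, hammingM_mul_J, hsmul]
    norm_num
  · rw [hNm, hJm, ← hmap, hammingJ_mul_M, hsmul]
    norm_num
  · have h3 : N ^ 3 = (9 : ℝ) • N + (6 : ℝ) • J := by
      rw [pow_succ, pow_two, hNm, hJm, ← hmap, ← hmap, hammingM_cube, hadd, hsmul, hsmul]
      norm_num
    rw [h3]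
    module
end

section
/- If C is an [n, m] linear code over 𝔽_q whose dual code has minimum distance d⊥ ≥ t+1, then the qᵐ codewords of C form the rows of an orthogonal array OA(qᵐ, n, q, t): every selection of t coordinate positions, restricted to the codewords of C, contains each t-tuple of 𝔽_q^t exactly q^{m−t} times. -/
open Finset

/-- Delsarte's theorem (linear case): if `C` is an `[n, m]` linear code over
`𝔽_q` whose dual code has minimum distance `≥ t+1`, then the codewords of `C`
form an orthogonal array `OA(qᵐ, n, q, t)`: for every choice of `t` distinct
coordinate positions and every `t`-tuple of values, exactly `q^{m−t}` codewords
agree with that tuple on those positions. -/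
theorem delsarte_orthogonal_array
    {F : Type*} [Field F] [Fintype F] [DecidableEq F]
    (n m t : ℕ)
    (C : Submodule F (Fin n → F))
    (hdim : Module.finrank F C = m)
    (hdual : ∀ y : Fin n → F, (∀ x ∈ C, (∑ i, x i * y i) = 0) → y ≠ 0 →
      t + 1 ≤ hammingNorm y)
    (σ : Fin t → Fin n) (hσ : Function.Injective σ) (a : Fin t → F) :
    Set.ncard {x : Fin n → F | x ∈ C ∧ ∀ i, x (σ i) = a i}
      = Fintype.card F ^ (m - t) := by
  classical
  -- The restriction map to the chosen coordinates.
  let f : C →ₗ[F] (Fin t → F) :=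
    { toFun := fun x i => (x : Fin n → F) (σ i)
      map_add' := fun x y => by ext i; simp
      map_smul' := fun c x => by ext i; simp }
  -- f is surjective
  have hsurj : Function.Surjective f := by
    rw [← LinearMap.range_eq_top]
    by_contra h
    obtain ⟨g, hg, hmap⟩ :=
      (LinearMap.range f).exists_dual_map_eq_bot_of_lt_top (lt_top_iff_ne_top.mpr h)
        inferInstance
    set u : Fin t → F := fun i => g (fun j => if i = j then 1 else 0) with hu
    set y : Fin n → F := fun j => ∑ i, if σ i = j then u i else 0 with hy
    have hyσ : ∀ i, y (σ i) = u i := by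
      intro i
      simp only [hy]
      rw [Finset.sum_eq_single i]
      · simp
      · intro b _ hb
        rw [if_neg (fun h => hb (hσ h))]
      · simp
    have hynot : ∀ j, j ∉ Set.range σ → y j = 0 := by
      intro j hj
      simp only [hy]
      apply Finset.sum_eq_zero
      intro i _
      rw [if_neg]
      exact fun h => hj ⟨i, h⟩
    -- g vanishes on range f
    have hgf : ∀ x : C, g (f x) = 0 := by
      intro x
      have : g (f x) ∈ (LinearMap.range f).map g :=
        Submodule.mem_map_of_mem (LinearMap.mem_range_self f x)
      rwa [hmap, Submodule.mem_bot] at this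
    have hdot : ∀ x ∈ C, (∑ i, x i * y i) = 0 := by
      intro x hx
      have hsplit : (∑ j, x j * y j) = ∑ i, x (σ i) * u i := by
        simp only [hy, Finset.mul_sum, mul_ite, mul_zero]
        rw [Finset.sum_comm]
        apply Finset.sum_congr rfl
        intro i _
        rw [Finset.sum_eq_single (σ i)] <;> simp +contextual [eq_comm]
      rw [hsplit, hu]
      have := hgf ⟨x, hx⟩
      rw [LinearMap.pi_apply_eq_sum_univ g] at this
      simpa only [smul_eq_mul, f, LinearMap.coe_mk, AddHom.coe_mk] using this
    have hyne : y ≠ 0 := by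
      have : ∃ i, u i ≠ 0 := by
        by_contra hu0
        push_neg at hu0
        apply hg
        apply LinearMap.ext
        intro w
        have h' : ∀ i, g (fun j => if i = j then 1 else 0) = 0 := hu0
        rw [LinearMap.pi_apply_eq_sum_univ g w]
        simp only [LinearMap.zero_apply]
        exact Finset.sum_eq_zero fun i _ => by rw [h' i, smul_zero]
      obtain ⟨i, hi⟩ := this
      intro h0
      rw [← hyσ i, h0] at hi
      exact hi rfl
    have hnorm : hammingNorm y ≤ t := by
      have hsub : ({j | y j ≠ 0} : Finset (Fin n)) ⊆ Finset.univ.image σ := by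
        intro j hj
        simp only [Finset.mem_filter, Finset.mem_image]
        by_contra hc
        simp only [Finset.mem_image, Finset.mem_univ, true_and, not_exists] at hc
        have : j ∉ Set.range σ := fun ⟨i, hi⟩ => hc i hi
        have := hynot j this
        simp [this] at hj
      calc hammingNorm y ≤ (Finset.univ.image σ).card := Finset.card_le_card hsub
        _ = t := by rw [Finset.card_image_of_injective _ hσ, Finset.card_univ, Fintype.card_fin]
    have := hdual y hdot hyne
    omega
  -- rank-nullity
  have hrange : LinearMap.range f = ⊤ := LinearMap.range_eq_top.mpr hsurj
  have hrn := LinearMap.finrank_range_add_finrank_ker f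
  rw [hrange, finrank_top, Module.finrank_fin_fun, hdim] at hrn
  have hker : Module.finrank F (LinearMap.ker f) = m - t := by omega
  -- pick a preimage of a
  obtain ⟨x0, hx0⟩ := hsurj a
  -- the solution set is equinumerous with ker f
  have hx0' : ∀ i, (x0 : Fin n → F) (σ i) = a i := fun i => congrFun hx0 i
  have hequiv : {x : Fin n → F | x ∈ C ∧ ∀ i, x (σ i) = a i} ≃ LinearMap.ker f :=
    { toFun := fun x => ⟨⟨x.1 - x0.1, sub_mem x.2.1 x0.2⟩, by
        rw [LinearMap.mem_ker]
        ext i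
        simp [f, x.2.2 i, hx0' i]⟩
      invFun := fun k => ⟨x0.1 + k.1.1, add_mem x0.2 k.1.2, fun i => by
        have : f k.1 = 0 := k.2
        have h0 : (k.1 : Fin n → F) (σ i) = 0 := congrFun this i
        simp [h0, hx0' i]⟩
      left_inv := fun x => by ext j; simp
      right_inv := fun k => by ext j; simp }
  calc Set.ncard {x : Fin n → F | x ∈ C ∧ ∀ i, x (σ i) = a i}
      = Nat.card {x : Fin n → F | x ∈ C ∧ ∀ i, x (σ i) = a i} :=
        (Nat.card_coe_set_eq _).symm
    _ = Nat.card (LinearMap.ker f) := Nat.card_congr hequiv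
    _ = Fintype.card (LinearMap.ker f) := Nat.card_eq_fintype_card
    _ = Fintype.card F ^ (m - t) := by
        rw [Module.card_eq_pow_finrank (K := F), hker]
end

section
/- Let N be a v×v 0-1 matrix with all row and column sums k satisfying NNᵀN = βN + α(J − N) (a symmetric partial geometric design with parameters (v,k;α,β)). Let Γ be the directed graph on the flags {(p,B) : N_{pB} = 1} with (p,B) → (q,C) iff (p,B) ≠ (q,C) and N_{pC} = 1. Then Γ is a directed strongly regular graph with parameters (vk, k²−1, β−1, β−2, α); that is, its adjacency matrix M satisfies MJ = JM = (k²−1)J and M² = (β−1)I + (β−2)M + α(J − I − M). -/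
open Matrix

/-- From a symmetric partial geometric design `(v,k;α,β)` with incidence matrix
`N`, the directed graph on flags `(p,B)` with `(p,B) → (q,C)` iff
`(p,B) ≠ (q,C)` and `p ∈ C` is a directed strongly regular graph with
parameters `(vk, k²−1, β−1, β−2, α)`. -/
theorem flag_graph_dsrg (v : ℕ) (k α β : ℝ)
    (N : Matrix (Fin v) (Fin v) ℝ)
    (h01 : ∀ p B, N p B = 0 ∨ N p B = 1)
    (J : Matrix (Fin v) (Fin v) ℝ) (hJ : J = Matrix.of fun _ _ => (1 : ℝ))
    (hrow : N * J = k • J) (hcol : J * N = k • J)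
    (hpg : N * Nᵀ * N = β • N + α • (J - N))
    (M : Matrix {pB : Fin v × Fin v // N pB.1 pB.2 = 1}
               {pB : Fin v × Fin v // N pB.1 pB.2 = 1} ℝ)
    (hM : ∀ x y, M x y = if x ≠ y ∧ N x.1.1 y.1.2 = 1 then (1 : ℝ) else 0)
    (JF : Matrix {pB : Fin v × Fin v // N pB.1 pB.2 = 1}
                {pB : Fin v × Fin v // N pB.1 pB.2 = 1} ℝ)
    (hJF : JF = Matrix.of fun _ _ => (1 : ℝ)) :
    M * JF = (k ^ 2 - 1) • JF ∧ JF * M = (k ^ 2 - 1) • JF ∧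
    M * M = (β - 1) • (1 : Matrix _ _ ℝ) + (β - 2) • M + α • (JF - 1 - M) := by
  -- rewrite M entrywise
  have hM' : ∀ x y : {pB : Fin v × Fin v // N pB.1 pB.2 = 1},
      M x y = N x.1.1 y.1.2 - if x = y then 1 else 0 := by
    intro x y
    rw [hM]
    by_cases h : x = y
    · subst h; simp [x.2]
    · rcases h01 x.1.1 y.1.2 with h1 | h1 <;> simp [h, h1]
  -- sums over flags as weighted sums over all pairs
  have hsum : ∀ f : Fin v × Fin v → ℝ,
      (∑ y : {pB : Fin v × Fin v // N pB.1 pB.2 = 1}, f y) =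
      ∑ pB : Fin v × Fin v, N pB.1 pB.2 * f pB := by
    intro f
    rw [← Finset.sum_subtype (Finset.univ.filter fun pB : Fin v × Fin v => N pB.1 pB.2 = 1)
        (by simp) f, Finset.sum_filter]
    refine Finset.sum_congr rfl fun pB _ => ?_
    rcases h01 pB.1 pB.2 with h1 | h1 <;> simp [h1]
  have hrowsum : ∀ p, (∑ C, N p C) = k := by
    intro p
    have := congrFun (congrFun hrow p) p
    simpa [hJ, Matrix.mul_apply] using this
  have hcolsum : ∀ C, (∑ q, N q C) = k := by
    intro C
    have := congrFun (congrFun hcol C) C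
    simpa [hJ, Matrix.mul_apply] using this
  have hpg' : ∀ p D, (∑ q, (∑ C, N p C * N q C) * N q D) =
      β * N p D + α * (1 - N p D) := by
    intro p D
    have := congrFun (congrFun hpg p) D
    simpa [hJ, Matrix.mul_apply, Matrix.transpose_apply] using this
  refine ⟨?_, ?_, ?_⟩
  · ext x z
    have : (∑ y : {pB : Fin v × Fin v // N pB.1 pB.2 = 1}, M x y) = k ^ 2 - 1 := by
      have h1 : (∑ y : {pB : Fin v × Fin v // N pB.1 pB.2 = 1},
          (N x.1.1 y.1.2 - if x = y then 1 else 0)) =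
          (∑ y : {pB : Fin v × Fin v // N pB.1 pB.2 = 1}, N x.1.1 y.1.2) - 1 := by
        rw [Finset.sum_sub_distrib]
        simp
      have h2 : (∑ y : {pB : Fin v × Fin v // N pB.1 pB.2 = 1}, N x.1.1 y.1.2) = k ^ 2 := by
        rw [hsum (fun pB => N x.1.1 pB.2), Fintype.sum_prod_type]
        have : ∀ q : Fin v, (∑ C, N q C * N x.1.1 C) = ∑ C, N q C * N x.1.1 C := fun _ => rfl
        rw [Finset.sum_comm]
        calc (∑ C, ∑ q, N q C * N x.1.1 C)
            = ∑ C, N x.1.1 C * k := by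
              refine Finset.sum_congr rfl fun C _ => ?_
              rw [← Finset.sum_mul, hcolsum C]; try ring
          _ = k * k := by rw [← Finset.sum_mul, hrowsum]; try ring
          _ = k ^ 2 := by ring
      calc (∑ y : {pB : Fin v × Fin v // N pB.1 pB.2 = 1}, M x y)
          = ∑ y : {pB : Fin v × Fin v // N pB.1 pB.2 = 1},
              (N x.1.1 y.1.2 - if x = y then 1 else 0) :=
            Finset.sum_congr rfl fun y _ => hM' x y
        _ = k ^ 2 - 1 := by rw [h1, h2]
    simp [Matrix.mul_apply, hJF, this]
  · ext x z
    have : (∑ y : {pB : Fin v × Fin v // N pB.1 pB.2 = 1}, M y z) = k ^ 2 - 1 := by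
      have h1 : (∑ y : {pB : Fin v × Fin v // N pB.1 pB.2 = 1},
          (N y.1.1 z.1.2 - if y = z then 1 else 0)) =
          (∑ y : {pB : Fin v × Fin v // N pB.1 pB.2 = 1}, N y.1.1 z.1.2) - 1 := by
        rw [Finset.sum_sub_distrib]
        simp
      have h2 : (∑ y : {pB : Fin v × Fin v // N pB.1 pB.2 = 1}, N y.1.1 z.1.2) = k ^ 2 := by
        rw [hsum (fun pB => N pB.1 z.1.2), Fintype.sum_prod_type]
        calc (∑ q, ∑ C, N q C * N q z.1.2)
            = ∑ q, N q z.1.2 * k := by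
              refine Finset.sum_congr rfl fun q _ => ?_
              rw [← Finset.sum_mul, hrowsum q]; try ring
          _ = k * k := by rw [← Finset.sum_mul, hcolsum]; try ring
          _ = k ^ 2 := by ring
      calc (∑ y : {pB : Fin v × Fin v // N pB.1 pB.2 = 1}, M y z)
          = ∑ y : {pB : Fin v × Fin v // N pB.1 pB.2 = 1},
              (N y.1.1 z.1.2 - if y = z then 1 else 0) :=
            Finset.sum_congr rfl fun y _ => hM' y z
        _ = k ^ 2 - 1 := by rw [h1, h2]
    simp [Matrix.mul_apply, hJF, this]
  · ext x z
    have hS : (∑ y : {pB : Fin v × Fin v // N pB.1 pB.2 = 1},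
        N x.1.1 y.1.2 * N y.1.1 z.1.2) =
        β * N x.1.1 z.1.2 + α * (1 - N x.1.1 z.1.2) := by
      rw [hsum (fun pB => N x.1.1 pB.2 * N pB.1 z.1.2), Fintype.sum_prod_type,
        ← hpg' x.1.1 z.1.2]
      refine Finset.sum_congr rfl fun q _ => ?_
      rw [Finset.sum_mul]
      exact Finset.sum_congr rfl fun C _ => by ring
    have hL : (M * M) x z = (∑ y : {pB : Fin v × Fin v // N pB.1 pB.2 = 1},
        N x.1.1 y.1.2 * N y.1.1 z.1.2) - 2 * N x.1.1 z.1.2 +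
        (if x = z then 1 else 0) := by
      rw [Matrix.mul_apply]
      have expand : ∀ y : {pB : Fin v × Fin v // N pB.1 pB.2 = 1},
          M x y * M y z = N x.1.1 y.1.2 * N y.1.1 z.1.2
            - (if y = z then N x.1.1 y.1.2 else 0)
            - (if x = y then N y.1.1 z.1.2 else 0)
            + (if x = y then (if y = z then 1 else 0) else 0) := by
        intro y
        rw [hM' x y, hM' y z]
        by_cases h1 : x = y <;> by_cases h2 : y = z <;> simp [h1, h2, x.2, y.2, z.2]
      rw [Finset.sum_congr rfl fun y _ => expand y]
      rw [Finset.sum_add_distrib, Finset.sum_sub_distrib, Finset.sum_sub_distrib]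
      simp only [Finset.sum_ite_eq, Finset.sum_ite_eq', Finset.mem_univ, if_true]
      by_cases h : x = z <;> simp [h] <;> ring
    rw [hL, hS]
    simp only [Matrix.add_apply, Matrix.smul_apply, Matrix.sub_apply, Matrix.one_apply, hJF,
      Matrix.of_apply, hM', smul_eq_mul]
    by_cases h : x = z <;> simp [h] <;> ring
end

section
/- Let N be a v×v 0-1 matrix with all row and column sums k satisfying NNᵀN = βN + α(J − N). Let Γ' be the directed graph on the antiflags {(p,B) : N_{pB} = 0} with (p,B) → (q,C) iff N_{pC} = 1. Then Γ' is a directed strongly regular graph with parameters (v(v−k), k(v−k), k²−α, k²−β, k²−α). -/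
open Matrix

/-- From a symmetric partial geometric design `(v,k;α,β)` with incidence matrix
`N`, the directed graph on antiflags `(p,B)` with `(p,B) → (q,C)` iff `p ∈ C`
is a directed strongly regular graph with parameters
`(v(v−k), k(v−k), k²−α, k²−β, k²−α)`. -/
theorem antiflag_graph_dsrg (v : ℕ) (k α β : ℝ)
    (N : Matrix (Fin v) (Fin v) ℝ)
    (h01 : ∀ p B, N p B = 0 ∨ N p B = 1)
    (J : Matrix (Fin v) (Fin v) ℝ) (hJ : J = Matrix.of fun _ _ => (1 : ℝ))
    (hrow : N * J = k • J) (hcol : J * N = k • J)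
    (hpg : N * Nᵀ * N = β • N + α • (J - N))
    (M : Matrix {pB : Fin v × Fin v // N pB.1 pB.2 = 0}
               {pB : Fin v × Fin v // N pB.1 pB.2 = 0} ℝ)
    (hM : ∀ x y, M x y = if N x.1.1 y.1.2 = 1 then (1 : ℝ) else 0)
    (JA : Matrix {pB : Fin v × Fin v // N pB.1 pB.2 = 0}
                {pB : Fin v × Fin v // N pB.1 pB.2 = 0} ℝ)
    (hJA : JA = Matrix.of fun _ _ => (1 : ℝ)) :
    M * JA = (k * ((v : ℝ) - k)) • JA ∧ JA * M = (k * ((v : ℝ) - k)) • JA ∧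
    M * M = (k ^ 2 - α) • (1 : Matrix _ _ ℝ) + (k ^ 2 - β) • M
      + (k ^ 2 - α) • (JA - 1 - M) := by
  -- replace the indicator by the matrix entry itself
  have hite : ∀ p C, (if N p C = 1 then (1 : ℝ) else 0) = N p C := by
    intro p C; rcases h01 p C with h | h <;> simp [h]
  -- sums over antiflags as weighted sums over all pairs
  have hsum : ∀ f : Fin v × Fin v → ℝ,
      (∑ x : {pB : Fin v × Fin v // N pB.1 pB.2 = 0}, f x.1)
        = ∑ pB : Fin v × Fin v, (1 - N pB.1 pB.2) * f pB := by
    intro f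
    rw [← Finset.sum_subtype (Finset.univ.filter fun pB => N pB.1 pB.2 = 0)
      (by simp) f, Finset.sum_filter]
    refine Finset.sum_congr rfl fun pB _ => ?_
    rcases h01 pB.1 pB.2 with h | h <;> simp [h]
  -- row sums of N
  have hrow' : ∀ p : Fin v, ∑ B, N p B = k := by
    intro p
    have h := congrFun (congrFun hrow p) p
    simpa [mul_apply, hJ, smul_eq_mul] using h
  have hcol' : ∀ C : Fin v, ∑ q, N q C = k := by
    intro C
    have h := congrFun (congrFun hcol C) C
    simpa [mul_apply, hJ, smul_eq_mul] using h
  have hpg' : ∀ p C : Fin v,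
      (∑ q, (∑ B, N p B * N q B) * N q C) = β * N p C + α * (1 - N p C) := by
    intro p C
    have h := congrFun (congrFun hpg p) C
    simpa [mul_apply, hJ, transpose_apply, smul_eq_mul, mul_sub, Matrix.sub_apply] using h
  refine ⟨?_, ?_, ?_⟩
  · ext x y
    rw [mul_apply]
    simp only [hM, hJA, Matrix.smul_apply, Matrix.of_apply, smul_eq_mul, mul_one, hite]
    rw [hsum (fun pB => N x.1.1 pB.2), Fintype.sum_prod_type, Finset.sum_comm]
    have key : ∀ C : Fin v, ∑ q, (1 - N q C) * N x.1.1 C = ((v : ℝ) - k) * N x.1.1 C := by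
      intro C
      rw [← Finset.sum_mul]
      congr 1
      simp [Finset.sum_sub_distrib, hcol' C]
    rw [Finset.sum_congr rfl fun C _ => key C, ← Finset.mul_sum, hrow']
    ring
  · ext x y
    rw [mul_apply]
    simp only [hM, hJA, Matrix.smul_apply, Matrix.of_apply, smul_eq_mul, one_mul, hite]
    rw [hsum (fun pB => N pB.1 y.1.2), Fintype.sum_prod_type]
    have key : ∀ q : Fin v, ∑ B, (1 - N q B) * N q y.1.2 = ((v : ℝ) - k) * N q y.1.2 := by
      intro q
      rw [← Finset.sum_mul]
      congr 1
      simp [Finset.sum_sub_distrib, hrow' q]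
    rw [Finset.sum_congr rfl fun q _ => key q, ← Finset.mul_sum, hcol']
    ring
  · ext x y
    rw [mul_apply]
    simp only [hM, hJA, Matrix.smul_apply, Matrix.of_apply, Matrix.add_apply,
      Matrix.sub_apply, Matrix.one_apply, smul_eq_mul, hite]
    rw [hsum (fun pB => N x.1.1 pB.2 * N pB.1 y.1.2), Fintype.sum_prod_type,
      Finset.sum_comm]
    have hkey : (∑ B, ∑ q, (1 - N q B) * (N x.1.1 B * N q y.1.2))
        = k * k - (β * N x.1.1 y.1.2 + α * (1 - N x.1.1 y.1.2)) := by
      have expand : ∀ (B q : Fin v), (1 - N q B) * (N x.1.1 B * N q y.1.2)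
          = N x.1.1 B * N q y.1.2 - N x.1.1 B * N q B * N q y.1.2 := by
        intro B q; ring
      simp only [expand, Finset.sum_sub_distrib]
      congr 1
      · have : ∀ B : Fin v, ∑ q, N x.1.1 B * N q y.1.2 = N x.1.1 B * k := by
          intro B; rw [← Finset.mul_sum, hcol']
        rw [Finset.sum_congr rfl fun B _ => this B, ← Finset.sum_mul, hrow', mul_comm]
      · rw [← hpg' x.1.1 y.1.2, Finset.sum_comm]
        refine Finset.sum_congr rfl fun q _ => ?_
        rw [Finset.sum_mul]
    rw [hkey]
    split_ifs with h <;> ring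
end
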